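/- A frequency vector x ∈ ℕ^p is an indispensable monomial if and only if the fiber F_{Ax} contains more than one B_{|x|−1}-equivalence class and the one-element set {x} forms a B_{|x|−1}-equivalence class of F_{Ax} by itself. -/

import Mathlib

open scoped BigOperators

section Defs

variable {ι κ : Type*} [Fintype ι]

/-- Embed a frequency vector `x ∈ ℕ^ι` into `ℤ^ι`. -/
def natToInt (x : ι → ℕ) : ι → ℤ := fun i => (x i : ℤ)

/-- The fiber of `t`: all frequency vectors `x` with `A x = t`. -/
def fiberOf (A : Matrix κ ι ℤ) (t : κ → ℤ) : Set (ι → ℕ) :=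
  {x | A.mulVec (natToInt x) = t}

/-- A move for `A`: an integer vector in the kernel of `A`. -/
def IsMove (A : Matrix κ ι ℤ) (z : ι → ℤ) : Prop := A.mulVec z = 0

/-- The positive part `z⁺` of an integer vector, as a frequency vector. -/
def posOf (z : ι → ℤ) : ι → ℕ := fun i => (z i).toNat

/-- The negative part `z⁻` of an integer vector, as a frequency vector. -/
def negOf (z : ι → ℤ) : ι → ℕ := fun i => (-z i).toNat

/-- The degree of a move: `deg z = |z⁺|`. -/
def degOf (z : ι → ℤ) : ℕ := ∑ i, posOf z i

/-- One step: add or subtract one move of `B`, staying in `ℕ^ι`. -/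
def MStep (B : Set (ι → ℤ)) (x y : ι → ℕ) : Prop :=
  ∃ z ∈ B, natToInt y = natToInt x + z ∨ natToInt y = natToInt x - z

/-- `y` is accessible from `x` by the moves of `B` (staying nonnegative throughout,
since all intermediate points are frequency vectors). -/
def Accessible (B : Set (ι → ℤ)) : (ι → ℕ) → (ι → ℕ) → Prop :=
  Relation.ReflTransGen (MStep B)

/-- A Markov basis: a finite set of moves such that every fiber forms a single
equivalence class for mutual accessibility. -/
def IsMarkovBasis (A : Matrix κ ι ℤ) (B : Set (ι → ℤ)) : Prop :=
  B.Finite ∧ (∀ z ∈ B, IsMove A z) ∧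
    ∀ t : κ → ℤ, ∀ x ∈ fiberOf A t, ∀ y ∈ fiberOf A t, Accessible B x y

/-- A minimal Markov basis: no proper subset is a Markov basis. -/
def IsMinimalMarkovBasis (A : Matrix κ ι ℤ) (B : Set (ι → ℤ)) : Prop :=
  IsMarkovBasis A B ∧ ∀ B' ⊂ B, ¬ IsMarkovBasis A B'

/-- An indispensable monomial: every Markov basis contains a move whose
positive or negative part is `x`. -/
def IsIndispensableMonomial (A : Matrix κ ι ℤ) (x : ι → ℕ) : Prop :=
  ∀ B : Set (ι → ℤ), IsMarkovBasis A B → ∃ z ∈ B, posOf z = x ∨ negOf z = x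

/-- `B_n`: the set of moves of degree at most `n`. -/
def Bmoves (A : Matrix κ ι ℤ) (n : ℕ) : Set (ι → ℤ) :=
  {z | IsMove A z ∧ degOf z ≤ n}

/-- The sample size `|t|` of a sufficient statistic `t` (well defined on nonempty
fibers under homogeneity). -/
noncomputable def sampleSize (A : Matrix κ ι ℤ) (t : κ → ℤ) : ℕ :=
  sInf {n | ∃ x ∈ fiberOf A t, ∑ i, x i = n}

/-- The `B_{|t|-1}`-equivalence classes of the fiber of `t`. -/
noncomputable def fiberClasses (A : Matrix κ ι ℤ) (t : κ → ℤ) : Set (Set (ι → ℕ)) :=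
  {C | ∃ x ∈ fiberOf A t,
    C = {y | y ∈ fiberOf A t ∧ Accessible (Bmoves A (sampleSize A t - 1)) x y}}

/-- Homogeneity: some rational vector `w` has `w ⬝ aᵢ = 1` for every column `aᵢ`. -/
def IsHomogeneousMatrix [Fintype κ] (A : Matrix κ ι ℤ) : Prop :=
  ∃ w : κ → ℚ, ∀ i : ι, ∑ j, w j * (A j i : ℚ) = 1

end Defs

section Aux

set_option linter.unusedSectionVars false

variable {ι κ : Type*} [Fintype ι] [Fintype κ]

lemma natToInt_inj {x y : ι → ℕ} (h : natToInt x = natToInt y) : x = y := by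
  funext i
  have := congrFun h i
  simpa [natToInt] using this

lemma natToInt_add (a b : ι → ℕ) : natToInt (a + b) = natToInt a + natToInt b := by
  funext i; simp [natToInt]

lemma natToInt_posOf_sub_negOf (z : ι → ℤ) :
    natToInt (posOf z) - natToInt (negOf z) = z := by
  funext i; simp only [natToInt, posOf, negOf, Pi.sub_apply]; omega

lemma sum_eq_zero_of_move {A : Matrix κ ι ℤ} (hA : IsHomogeneousMatrix A)
    {z : ι → ℤ} (hz : A.mulVec z = 0) : ∑ i, z i = 0 := by
  obtain ⟨w, hw⟩ := hA
  have h1 : ∑ j, w j * ((A.mulVec z) j : ℚ) = 0 := by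
    rw [hz]; simp
  have h2 : ∑ j, w j * ((A.mulVec z) j : ℚ) = ∑ i, (z i : ℚ) := by
    have : ∀ j, w j * ((A.mulVec z) j : ℚ) = ∑ i, (w j * (A j i : ℚ)) * (z i : ℚ) := by
      intro j
      simp only [Matrix.mulVec, dotProduct]
      push_cast
      rw [Finset.mul_sum]
      exact Finset.sum_congr rfl fun i _ => by ring
    rw [Finset.sum_congr rfl fun j _ => this j, Finset.sum_comm]
    refine Finset.sum_congr rfl fun i _ => ?_
    rw [← Finset.sum_mul, hw i, one_mul]
  have : (↑(∑ i, z i) : ℚ) = 0 := by push_cast; rw [← h2, h1]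
  exact_mod_cast this

lemma sum_posOf_eq_sum_negOf {A : Matrix κ ι ℤ} (hA : IsHomogeneousMatrix A)
    {z : ι → ℤ} (hz : A.mulVec z = 0) : ∑ i, posOf z i = ∑ i, negOf z i := by
  have h := sum_eq_zero_of_move hA hz
  have : (↑(∑ i, posOf z i) : ℤ) = ↑(∑ i, negOf z i) := by
    push_cast
    have : ∀ i, (posOf z i : ℤ) = z i + (negOf z i : ℤ) := by
      intro i; simp only [posOf, negOf]; omega
    rw [Finset.sum_congr rfl fun i _ => this i, Finset.sum_add_distrib, h, zero_add]
  exact_mod_cast this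

lemma sub_is_move (A : Matrix κ ι ℤ) {t : κ → ℤ} {x y : ι → ℕ}
    (hx : x ∈ fiberOf A t) (hy : y ∈ fiberOf A t) :
    A.mulVec (natToInt y - natToInt x) = 0 := by
  rw [Matrix.mulVec_sub, hx, hy, sub_self]

lemma fiber_sum_eq {A : Matrix κ ι ℤ} (hA : IsHomogeneousMatrix A) {t : κ → ℤ} {x y : ι → ℕ}
    (hx : x ∈ fiberOf A t) (hy : y ∈ fiberOf A t) : ∑ i, y i = ∑ i, x i := by
  have h := sum_eq_zero_of_move hA (sub_is_move A hx hy)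
  have : (↑(∑ i, y i) : ℤ) = ↑(∑ i, x i) := by
    push_cast
    have h2 : ∑ i, (natToInt y i - natToInt x i) = 0 := by
      have := congrArg (fun f => f) h
      simpa using h
    rw [Finset.sum_sub_distrib] at h2
    simp only [natToInt] at h2
    omega
  exact_mod_cast this

/-- pointwise ≤ with sums matching forces equality -/
lemma eq_of_le_of_sum_le {f g : ι → ℕ} (h : ∀ i, f i ≤ g i)
    (hs : ∑ i, g i ≤ ∑ i, f i) : f = g := by
  funext i
  by_contra hne
  have hlt : f i < g i := lt_of_le_of_ne (h i) hne
  have : ∑ j, f j < ∑ j, g j :=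
    Finset.sum_lt_sum (fun j _ => h j) ⟨i, Finset.mem_univ i, hlt⟩
  omega

end Aux
section Aux2

set_option linter.unusedSectionVars false

variable {ι κ : Type*} [Fintype ι] [Fintype κ]

lemma fiber_finite {A : Matrix κ ι ℤ} (hA : IsHomogeneousMatrix A) {t : κ → ℤ}
    {x : ι → ℕ} (hx : x ∈ fiberOf A t) : (fiberOf A t).Finite := by
  set n := ∑ i, x i
  have hsub : fiberOf A t ⊆ Set.pi Set.univ (fun _ : ι => Set.Iic n) := by
    intro y hy i _
    have hsum : ∑ i, y i = n := fiber_sum_eq hA hx hy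
    calc y i ≤ ∑ j, y j := Finset.single_le_sum (fun j _ => Nat.zero_le _) (Finset.mem_univ i)
    _ = n := hsum
  exact Set.Finite.subset (Set.Finite.pi fun _ => Set.finite_Iic n) hsub

lemma bmoves_finite {A : Matrix κ ι ℤ} (hA : IsHomogeneousMatrix A) (m : ℕ) :
    (Bmoves A m).Finite := by
  have hsub : Bmoves A m ⊆ Set.pi Set.univ (fun _ : ι => Set.Icc (-(m:ℤ)) m) := by
    intro z hz i _
    obtain ⟨hmove, hdeg⟩ := hz
    have hps : ∑ i, posOf z i = ∑ i, negOf z i := sum_posOf_eq_sum_negOf hA hmove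
    have h1 : posOf z i ≤ m := le_trans
      (Finset.single_le_sum (fun j _ => Nat.zero_le _) (Finset.mem_univ i)) hdeg
    have h2 : negOf z i ≤ m := le_trans
      (Finset.single_le_sum (fun j _ => Nat.zero_le _) (Finset.mem_univ i)) (hps ▸ hdeg)
    simp only [posOf, negOf] at h1 h2
    constructor <;> omega
  exact Set.Finite.subset (Set.Finite.pi fun _ => Set.finite_Icc _ _) hsub

lemma mstep_symm {B : Set (ι → ℤ)} {a b : ι → ℕ} (h : MStep B a b) : MStep B b a := by
  obtain ⟨z, hz, h | h⟩ := h
  · exact ⟨z, hz, Or.inr (by rw [h]; ring)⟩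
  · exact ⟨z, hz, Or.inl (by rw [h]; ring)⟩

lemma accessible_symm {B : Set (ι → ℤ)} {a b : ι → ℕ} (h : Accessible B a b) :
    Accessible B b a :=
  haveI : Std.Symm (MStep B) := ⟨fun _ _ => mstep_symm⟩
  Relation.ReflTransGen.stdSymm.symm _ _ h

lemma accessible_mono {B B' : Set (ι → ℤ)} (hBB : B ⊆ B') {a b : ι → ℕ}
    (h : Accessible B a b) : Accessible B' a b :=
  Relation.ReflTransGen.mono (p := MStep B') (fun _ _ hs => by
    obtain ⟨z, hz, hor⟩ := hs; exact ⟨z, hBB hz, hor⟩) _ _ h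

lemma mstep_translate {B : Set (ι → ℤ)} {a b : ι → ℕ} (c : ι → ℕ) (h : MStep B a b) :
    MStep B (c + a) (c + b) := by
  obtain ⟨z, hz, h | h⟩ := h
  · exact ⟨z, hz, Or.inl (by rw [natToInt_add, natToInt_add, h]; ring)⟩
  · exact ⟨z, hz, Or.inr (by rw [natToInt_add, natToInt_add, h]; ring)⟩

lemma accessible_translate {B : Set (ι → ℤ)} {a b : ι → ℕ} (c : ι → ℕ)
    (h : Accessible B a b) : Accessible B (c + a) (c + b) := by
  induction h with
  | refl => exact Relation.ReflTransGen.refl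
  | tail _ hstep ih => exact Relation.ReflTransGen.tail ih (mstep_translate c hstep)

lemma accessible_of_forall_mstep {B B' : Set (ι → ℤ)}
    (h : ∀ a b : ι → ℕ, MStep B a b → Accessible B' a b) {a b : ι → ℕ}
    (hab : Accessible B a b) : Accessible B' a b := by
  induction hab with
  | refl => exact Relation.ReflTransGen.refl
  | tail _ hstep ih => exact Relation.ReflTransGen.trans ih (h _ _ hstep)

/-- decomposition of an MStep target : if `natToInt v = natToInt u + z` then
`negOf z ≤ u`, `u = (u - negOf z) + negOf z` and `v = (u - negOf z) + posOf z`. -/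
lemma step_decomp {u v : ι → ℕ} {z : ι → ℤ} (h : natToInt v = natToInt u + z) :
    u = (u - negOf z) + negOf z ∧ v = (u - negOf z) + posOf z := by
  have hle : ∀ i, negOf z i ≤ u i := by
    intro i
    have h1 := congrFun h i
    simp only [natToInt, Pi.add_apply] at h1
    show (-z i).toNat ≤ u i
    omega
  constructor
  · funext i
    have := hle i
    simp only [Pi.add_apply, Pi.sub_apply]
    omega
  · funext i
    have := congrFun h i
    have h2 := hle i
    simp only [natToInt, Pi.add_apply, Pi.sub_apply, posOf, negOf] at this h2 ⊢
    omega

lemma posOf_neg (z : ι → ℤ) : posOf (-z) = negOf z := rfl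

lemma negOf_neg (z : ι → ℤ) : negOf (-z) = posOf z := by
  funext i; simp [negOf, posOf]

lemma negOf_fiber {A : Matrix κ ι ℤ} {z : ι → ℤ} (hz : A.mulVec z = 0) :
    A.mulVec (natToInt (negOf z)) = A.mulVec (natToInt (posOf z)) := by
  have : natToInt (posOf z) = natToInt (negOf z) + z := by
    funext i
    simp only [natToInt, posOf, negOf, Pi.add_apply]
    omega
  rw [this, Matrix.mulVec_add, hz, add_zero]

end Aux2
section Graver

set_option linter.unusedSectionVars false

variable {ι κ : Type*} [Fintype ι] [Fintype κ]

/-- conformal (sign-compatible componentwise) order on integer vectors -/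
def graverLE (z w : ι → ℤ) : Prop :=
  (∀ i, posOf z i ≤ posOf w i) ∧ (∀ i, negOf z i ≤ negOf w i)

def kerSet (A : Matrix κ ι ℤ) : Set (ι → ℤ) := {z | A.mulVec z = 0 ∧ z ≠ 0}

/-- the Graver basis: conformally minimal nonzero kernel elements -/
def graver (A : Matrix κ ι ℤ) : Set (ι → ℤ) :=
  {z | z ∈ kerSet A ∧ ∀ w ∈ kerSet A, graverLE w z → w = z}

lemma graverLE_antisymm {z w : ι → ℤ} (h1 : graverLE z w) (h2 : graverLE w z) : z = w := by
  funext i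
  have a1 := h1.1 i; have a2 := h1.2 i; have b1 := h2.1 i; have b2 := h2.2 i
  simp only [posOf, negOf] at a1 a2 b1 b2
  omega

/-- measure used for induction -/
def muOf (z : ι → ℤ) : ℕ := ∑ i, (posOf z i + negOf z i)

lemma muOf_pos {z : ι → ℤ} (hz : z ≠ 0) : 0 < muOf z := by
  have : ∃ i, z i ≠ 0 := by
    by_contra hc
    push_neg at hc
    exact hz (funext hc)
  obtain ⟨i, hi⟩ := this
  have : 0 < posOf z i + negOf z i := by simp only [posOf, negOf]; omega
  exact lt_of_lt_of_le this
    (Finset.single_le_sum (f := fun i => posOf z i + negOf z i)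
      (fun j _ => Nat.zero_le _) (Finset.mem_univ i))

lemma exists_graver_le {A : Matrix κ ι ℤ} :
    ∀ z ∈ kerSet A, ∃ g ∈ graver A, graverLE g z := by
  suffices h : ∀ m : ℕ, ∀ z ∈ kerSet A, muOf z ≤ m → ∃ g ∈ graver A, graverLE g z by
    intro z hz; exact h (muOf z) z hz le_rfl
  intro m
  induction m with
  | zero =>
    intro z hz hm
    exact absurd (Nat.le_antisymm hm (Nat.zero_le _)) (muOf_pos hz.2).ne'
  | succ m ih =>
    intro z hz hm
    by_cases hmin : ∀ w ∈ kerSet A, graverLE w z → w = z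
    · exact ⟨z, ⟨hz, hmin⟩, ⟨fun i => le_rfl, fun i => le_rfl⟩⟩
    · push_neg at hmin
      obtain ⟨w, hw, hwz, hne⟩ := hmin
      have hlt : muOf w < muOf z := by
        have hle : muOf w ≤ muOf z :=
          Finset.sum_le_sum fun i _ => Nat.add_le_add (hwz.1 i) (hwz.2 i)
        rcases lt_or_eq_of_le hle with h | h
        · exact h
        · exfalso
          apply hne
          apply graverLE_antisymm hwz
          -- from equal sums and pointwise ≤, each component is equal
          have hpe : ∀ i, posOf w i + negOf w i = posOf z i + negOf z i := by
            have := eq_of_le_of_sum_le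
              (f := fun i => posOf w i + negOf w i)
              (g := fun i => posOf z i + negOf z i)
              (fun i => Nat.add_le_add (hwz.1 i) (hwz.2 i)) (le_of_eq h.symm)
            intro i; exact congrFun this i
          constructor <;> intro i <;> have := hpe i <;>
            have h1 := hwz.1 i <;> have h2 := hwz.2 i <;> omega
      obtain ⟨g, hg, hgw⟩ := ih w hw (by omega)
      exact ⟨g, hg, ⟨fun i => le_trans (hgw.1 i) (hwz.1 i),
        fun i => le_trans (hgw.2 i) (hwz.2 i)⟩⟩

lemma graver_finite (A : Matrix κ ι ℤ) : (graver A).Finite := by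
  have hanti : IsAntichain graverLE (graver A) := by
    intro g hg g' hg' hne hle
    exact hne (hg'.2 g hg.1 hle)
  have hpwo : (graver A).PartiallyWellOrderedOn graverLE := by
    intro f
    have hPWO : @WellQuasiOrdered (ι ⊕ ι → ℕ) (· ≤ ·) := wellQuasiOrdered_le
    obtain ⟨m, n, hmn, hle⟩ := hPWO
      (fun k => Sum.elim (posOf (f k).1) (negOf (f k).1))
    refine ⟨m, n, hmn, ?_, ?_⟩
    · intro i; exact hle (Sum.inl i)
    · intro i; exact hle (Sum.inr i)
  exact hanti.finite_of_partiallyWellOrderedOn hpwo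

lemma graver_moves {A : Matrix κ ι ℤ} {z : ι → ℤ} (hz : z ∈ graver A) : IsMove A z :=
  hz.1.1

/-- the key connectivity property : the Graver basis connects every fiber. -/
lemma graver_connects (A : Matrix κ ι ℤ) (t : κ → ℤ)
    {x y : ι → ℕ} (hx : x ∈ fiberOf A t) (hy : y ∈ fiberOf A t) :
    Accessible (graver A) x y := by
  suffices h : ∀ m : ℕ, ∀ t : κ → ℤ, ∀ x y : ι → ℕ, x ∈ fiberOf A t → y ∈ fiberOf A t →
      muOf (natToInt y - natToInt x) ≤ m → Accessible (graver A) x y by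
    exact h _ t x y hx hy le_rfl
  intro m
  induction m with
  | zero =>
    intro t x y hx hy hm
    have hz : natToInt y - natToInt x = 0 := by
      by_contra hc
      exact absurd (Nat.le_antisymm hm (Nat.zero_le _)) (muOf_pos hc).ne'
    have : natToInt y = natToInt x := by
      funext i
      have := congrFun hz i
      simp only [Pi.sub_apply, Pi.zero_apply] at this
      omega
    rw [natToInt_inj this]
    exact Relation.ReflTransGen.refl
  | succ m ih =>
    intro t x y hx hy hm
    set z := natToInt y - natToInt x with hzdef
    by_cases hz0 : z = 0
    · have : natToInt y = natToInt x := by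
        funext i
        have := congrFun hz0 i
        simp only [hzdef, Pi.sub_apply, Pi.zero_apply] at this ⊢
        omega
      rw [natToInt_inj this]
      exact Relation.ReflTransGen.refl
    · have hzker : z ∈ kerSet A := ⟨sub_is_move A hx hy, hz0⟩
      obtain ⟨g, hg, hgz⟩ := exists_graver_le z hzker
      -- x + g is a valid frequency vector
      have hnn : ∀ i, 0 ≤ x i + g i := by
        intro i
        have h1 := hgz.2 i
        have h2 : z i = (y i : ℤ) - (x i : ℤ) := rfl
        simp only [posOf, negOf] at h1
        omega
      set x₁ : ι → ℕ := fun i => ((x i : ℤ) + g i).toNat with hx₁def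
      have hx₁ : natToInt x₁ = natToInt x + g := by
        funext i
        have := hnn i
        simp only [natToInt, hx₁def, Pi.add_apply]
        omega
      have hx₁fib : x₁ ∈ fiberOf A t := by
        show A.mulVec (natToInt x₁) = t
        rw [hx₁, Matrix.mulVec_add, hg.1.1, add_zero]
        exact hx
      have hstep : MStep (graver A) x x₁ := ⟨g, hg, Or.inl hx₁⟩
      -- the residual vector
      have hres : natToInt y - natToInt x₁ = z - g := by rw [hx₁]; ring
      have hμ : muOf (z - g) < muOf z := by
        have hpt : ∀ i, posOf (z - g) i + negOf (z - g) i
            = (posOf z i + negOf z i) - (posOf g i + negOf g i) := by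
          intro i
          have h1 := hgz.1 i
          have h2 := hgz.2 i
          simp only [posOf, negOf, Pi.sub_apply] at h1 h2 ⊢
          omega
        have hb : ∀ i, posOf g i + negOf g i ≤ posOf z i + negOf z i :=
          fun i => Nat.add_le_add (hgz.1 i) (hgz.2 i)
        have : muOf (z - g) = muOf z - muOf g := by
          unfold muOf
          rw [Finset.sum_congr rfl fun i _ => hpt i, Finset.sum_tsub_distrib]
          intro i _; exact hb i
        have hgy : 0 < muOf g := muOf_pos (by
          intro hg0
          exact (hg.1.2) hg0)
        have hμle : muOf g ≤ muOf z := Finset.sum_le_sum fun i _ => hb i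
        omega
      have hacc : Accessible (graver A) x₁ y := by
        apply ih t x₁ y hx₁fib hy
        rw [hres]
        omega
      exact Relation.ReflTransGen.head hstep hacc

lemma graver_isMarkovBasis (A : Matrix κ ι ℤ) : IsMarkovBasis A (graver A) :=
  ⟨graver_finite A, fun z hz => graver_moves hz, fun t x hx y hy => graver_connects A t hx hy⟩

end Graver
section Main

set_option linter.unusedSectionVars false

variable {ι κ : Type*} [Fintype ι] [Fintype κ]

lemma sum_pos_of_ne_zero {x : ι → ℕ} (hx : x ≠ 0) : 0 < ∑ i, x i := by
  by_contra h
  push_neg at h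
  apply hx
  funext i
  have := Finset.sum_eq_zero_iff.mp (Nat.le_zero.mp h) i (Finset.mem_univ i)
  simpa using this

lemma forbidden_eq {x : ι → ℕ} {A : Matrix κ ι ℤ} (hA : IsHomogeneousMatrix A)
    {z : ι → ℤ} (hmv : IsMove A z) (h : posOf z = x ∨ negOf z = x) :
    degOf z = ∑ i, x i := by
  have hpn := sum_posOf_eq_sum_negOf hA hmv
  cases h with
  | inl h => rw [degOf, h]
  | inr h => rw [degOf, hpn, h]

lemma bmoves_no_forbidden {x : ι → ℕ} {A : Matrix κ ι ℤ} (hA : IsHomogeneousMatrix A)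
    (hx0 : x ≠ 0) :
    ∀ z ∈ Bmoves A ((∑ i, x i) - 1), ¬(posOf z = x ∨ negOf z = x) := by
  rintro z ⟨hmv, hdeg⟩ hor
  have h1 := forbidden_eq hA hmv hor
  have h2 := sum_pos_of_ne_zero hx0
  omega

lemma fiber_self (A : Matrix κ ι ℤ) (x : ι → ℕ) :
    x ∈ fiberOf A (A.mulVec (natToInt x)) := rfl

/-- extracting a conformal decomposition from a step -/
lemma step_le {u v : ι → ℕ} {z : ι → ℤ} (h : natToInt v = natToInt u + z) :
    ∀ i, negOf z i ≤ u i := by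
  intro i
  have h1 := congrFun h i
  simp only [natToInt, Pi.add_apply] at h1
  show (-z i).toNat ≤ u i
  omega

/-- the backward direction : singleton class + disconnected fiber forces every
Markov basis to contain a move with positive or negative part `x`. -/
lemma backward_dir {A : Matrix κ ι ℤ} (hA : IsHomogeneousMatrix A) (x : ι → ℕ)
    (h1 : ∃ y₁ ∈ fiberOf A (A.mulVec (natToInt x)),
      ∃ y₂ ∈ fiberOf A (A.mulVec (natToInt x)),
        ¬ Accessible (Bmoves A ((∑ i, x i) - 1)) y₁ y₂)
    (h2 : ∀ y ∈ fiberOf A (A.mulVec (natToInt x)),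
      Accessible (Bmoves A ((∑ i, x i) - 1)) x y → y = x) :
    IsIndispensableMonomial A x := by
  intro B hB
  by_contra hno
  push_neg at hno
  set t := A.mulVec (natToInt x) with ht
  set n := ∑ i, x i with hn
  -- every point accessible from x via B equals x
  have key : ∀ v : ι → ℕ, Accessible B x v → v = x := by
    intro v hacc
    induction hacc with
    | refl => rfl
    | @tail u v' hprev hstep ih =>
      rw [ih] at hstep
      obtain ⟨z, hzB, hor⟩ := hstep
      have hmv : IsMove A z := hB.2.1 z hzB
      -- unify the two directions
      obtain ⟨w, hwmv, hwparts, hwstep⟩ :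
          ∃ w : ι → ℤ, IsMove A w ∧
            ((posOf w = posOf z ∧ negOf w = negOf z) ∨
             (posOf w = negOf z ∧ negOf w = posOf z)) ∧
            natToInt v' = natToInt x + w := by
        cases hor with
        | inl h => exact ⟨z, hmv, Or.inl ⟨rfl, rfl⟩, h⟩
        | inr h =>
          refine ⟨-z, ?_, Or.inr ⟨posOf_neg z, negOf_neg z⟩, by rw [h]; ring⟩
          show A.mulVec (-z) = 0
          rw [Matrix.mulVec_neg, hmv, neg_zero]
      have hsums : ∑ i, posOf w i = ∑ i, negOf w i := sum_posOf_eq_sum_negOf hA hwmv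
      have hle : ∀ i, negOf w i ≤ x i := step_le hwstep
      by_cases hc : n ≤ ∑ i, posOf w i
      · -- then negOf w = x, contradiction
        have hxw : negOf w = x := by
          apply eq_of_le_of_sum_le hle
          omega
        rcases hwparts with ⟨hp, hq⟩ | ⟨hp, hq⟩
        · exact absurd (hq ▸ hxw) (hno z hzB).2
        · exact absurd (hq ▸ hxw) (hno z hzB).1
      · -- small degree : use h2
        have hzdeg : degOf z ≤ n - 1 := by
          have : degOf z = ∑ i, posOf w i ∨ degOf z = ∑ i, negOf w i := by
            rcases hwparts with ⟨hp, _⟩ | ⟨_, hq⟩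
            · exact Or.inl (by rw [degOf, hp])
            · exact Or.inr (by rw [degOf, hq])
          omega
        have hstep' : MStep (Bmoves A (n - 1)) x v' := ⟨z, ⟨hmv, hzdeg⟩, hor⟩
        have hv'fib : v' ∈ fiberOf A t := by
          show A.mulVec (natToInt v') = t
          rw [hwstep, Matrix.mulVec_add, hwmv, add_zero]
        exact h2 v' hv'fib (Relation.ReflTransGen.single hstep')
  obtain ⟨y₁, hy₁, y₂, hy₂, hnacc⟩ := h1
  have e1 : y₁ = x := key y₁ (hB.2.2 t x (fiber_self A x) y₁ hy₁)
  have e2 : y₂ = x := key y₂ (hB.2.2 t x (fiber_self A x) y₂ hy₂)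
  exact hnacc (e1 ▸ e2 ▸ Relation.ReflTransGen.refl)

end Main
section Forward

set_option linter.unusedSectionVars false

variable {ι κ : Type*} [Fintype ι] [Fintype κ]

/-- simulating a single step by a forbidden move -/
lemma sim_step {A : Matrix κ ι ℤ} {x : ι → ℕ} {B' : Set (ι → ℤ)}
    (hconn : ∀ y' ∈ fiberOf A (A.mulVec (natToInt x)), Accessible B' x y')
    {u v : ι → ℕ} {w : ι → ℤ} (hwmv : IsMove A w)
    (hxw : posOf w = x ∨ negOf w = x)
    (h : natToInt v = natToInt u + w) : Accessible B' u v := by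
  obtain ⟨hu, hv⟩ := step_decomp h
  set c := u - negOf w with hc
  have hfib := negOf_fiber (z := w) hwmv
  cases hxw with
  | inl hxw =>
    -- u = c + negOf w , v = c + x ; negOf w ∈ fiber
    have hnf : negOf w ∈ fiberOf A (A.mulVec (natToInt x)) := by
      show A.mulVec (natToInt (negOf w)) = _
      rw [hfib, hxw]
    have := accessible_translate c (accessible_symm (hconn (negOf w) hnf))
    rw [← hu, ← hxw, ← hv] at this
    exact this
  | inr hxw =>
    -- u = c + x , v = c + posOf w ; posOf w ∈ fiber
    have hpf : posOf w ∈ fiberOf A (A.mulVec (natToInt x)) := by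
      show A.mulVec (natToInt (posOf w)) = _
      rw [← hfib, hxw]
    have := accessible_translate c (hconn (posOf w) hpf)
    rw [← hxw, ← hu, ← hv] at this
    exact this

/-- the patched basis is a Markov basis -/
lemma patched_isMarkovBasis {A : Matrix κ ι ℤ} {x : ι → ℕ} {B' : Set (ι → ℤ)}
    (hB'fin : B'.Finite) (hB'mov : ∀ z ∈ B', IsMove A z)
    (hconn : ∀ y' ∈ fiberOf A (A.mulVec (natToInt x)), Accessible B' x y') :
    IsMarkovBasis A ({z ∈ graver A | ¬(posOf z = x ∨ negOf z = x)} ∪ B') := by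
  refine ⟨Set.Finite.union (Set.Finite.subset (graver_finite A) fun z hz => hz.1) hB'fin,
    ?_, ?_⟩
  · rintro z (hz | hz)
    · exact graver_moves hz.1
    · exact hB'mov z hz
  · intro t u hu v hv
    apply accessible_of_forall_mstep (B := graver A)
    · intro a b hstep
      obtain ⟨g, hg, hor⟩ := hstep
      by_cases hforb : posOf g = x ∨ negOf g = x
      · -- simulate
        have hgmv : IsMove A g := graver_moves hg
        cases hor with
        | inl h =>
          apply accessible_mono Set.subset_union_right
          exact sim_step hconn hgmv hforb h
        | inr h =>
          apply accessible_mono Set.subset_union_right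
          have hmv : IsMove A (-g) := by
            show A.mulVec (-g) = 0
            rw [Matrix.mulVec_neg, hgmv, neg_zero]
          apply sim_step hconn hmv
          · rw [posOf_neg, negOf_neg]
            tauto
          · rw [h]; ring
      · exact Relation.ReflTransGen.single
          ⟨g, Or.inl ⟨hg, hforb⟩, hor⟩
    · exact graver_connects A t hu hv

lemma not_indisp_of_conn {A : Matrix κ ι ℤ} {x : ι → ℕ} {B' : Set (ι → ℤ)}
    (hB'fin : B'.Finite) (hB'mov : ∀ z ∈ B', IsMove A z)
    (hB'no : ∀ z ∈ B', ¬(posOf z = x ∨ negOf z = x))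
    (hconn : ∀ y' ∈ fiberOf A (A.mulVec (natToInt x)), Accessible B' x y') :
    ¬ IsIndispensableMonomial A x := by
  intro hind
  obtain ⟨z, hz, hor⟩ := hind _ (patched_isMarkovBasis hB'fin hB'mov hconn)
  cases hz with
  | inl hz => exact hz.2 hor
  | inr hz => exact hB'no z hz hor

/-- a nonzero kernel element has nonzero positive and negative part (homogeneity) -/
lemma not_indisp_zero {A : Matrix κ ι ℤ} (hA : IsHomogeneousMatrix A) :
    ¬ IsIndispensableMonomial A (0 : ι → ℕ) := by
  intro hind
  obtain ⟨z, hz, hor⟩ := hind _ (graver_isMarkovBasis A)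
  have hpn := sum_posOf_eq_sum_negOf hA (graver_moves hz)
  have hz0 : z = 0 := by
    have hps : ∀ i, posOf z i = 0 ∧ negOf z i = 0 := by
      cases hor with
      | inl h =>
        have h0 : ∑ i, posOf z i = 0 := by
          rw [h]; simp
        intro i
        have h1 : posOf z i = 0 :=
          Finset.sum_eq_zero_iff.mp h0 i (Finset.mem_univ i)
        have h2 : negOf z i = 0 :=
          Finset.sum_eq_zero_iff.mp (hpn ▸ h0) i (Finset.mem_univ i)
        exact ⟨h1, h2⟩
      | inr h =>
        have h0 : ∑ i, negOf z i = 0 := by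
          rw [h]; simp
        intro i
        have h1 : negOf z i = 0 :=
          Finset.sum_eq_zero_iff.mp h0 i (Finset.mem_univ i)
        have h2 : posOf z i = 0 :=
          Finset.sum_eq_zero_iff.mp (hpn.symm ▸ h0) i (Finset.mem_univ i)
        exact ⟨h2, h1⟩
    funext i
    have := hps i
    simp only [posOf, negOf] at this
    show z i = 0
    omega
  exact hz.1.2 hz0

end Forward
section Final

set_option linter.unusedSectionVars false

variable {ι κ : Type*} [Fintype ι] [Fintype κ]

lemma forward_conj1 {A : Matrix κ ι ℤ} (hA : IsHomogeneousMatrix A) {x : ι → ℕ}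
    (hx0 : x ≠ 0) (hind : IsIndispensableMonomial A x) :
    ∃ y₁ ∈ fiberOf A (A.mulVec (natToInt x)), ∃ y₂ ∈ fiberOf A (A.mulVec (natToInt x)),
      ¬ Accessible (Bmoves A ((∑ i, x i) - 1)) y₁ y₂ := by
  by_contra hcl
  push_neg at hcl
  refine not_indisp_of_conn (bmoves_finite hA _) (fun z hz => hz.1)
    (bmoves_no_forbidden hA hx0) ?_ hind
  intro y' hy'
  exact hcl x (fiber_self A x) y' hy'

lemma forward_conj2 {A : Matrix κ ι ℤ} (hA : IsHomogeneousMatrix A) {x : ι → ℕ}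
    (hx0 : x ≠ 0) (hind : IsIndispensableMonomial A x) :
    ∀ y ∈ fiberOf A (A.mulVec (natToInt x)),
      Accessible (Bmoves A ((∑ i, x i) - 1)) x y → y = x := by
  intro y hy hacc
  by_contra hne
  set t := A.mulVec (natToInt x) with ht
  set M : Set (ι → ℤ) := (fun y'' => natToInt y - natToInt y'') '' (fiberOf A t \ {x, y})
    with hM
  refine not_indisp_of_conn (B' := Bmoves A ((∑ i, x i) - 1) ∪ M) ?_ ?_ ?_ ?_ hind
  · exact Set.Finite.union (bmoves_finite hA _)
      (Set.Finite.image _ (Set.Finite.diff (fiber_finite hA (fiber_self A x))))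
  · rintro z (hz | ⟨y'', hy'', rfl⟩)
    · exact hz.1
    · exact sub_is_move A hy''.1 hy
  · rintro z (hz | ⟨y'', hy'', rfl⟩) hor
    · exact bmoves_no_forbidden hA hx0 z hz hor
    · have hyx : ∑ i, y i = ∑ i, x i := fiber_sum_eq hA (fiber_self A x) hy
      have hy''x : ∑ i, y'' i = ∑ i, x i := fiber_sum_eq hA (fiber_self A x) hy''.1
      cases hor with
      | inl h =>
        -- posOf (y - y'') = x forces y = x
        apply hne
        have hle : ∀ i, x i ≤ y i := by
          intro i
          have := congrFun h i
          simp only [posOf, Pi.sub_apply, natToInt] at this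
          omega
        exact (eq_of_le_of_sum_le hle (by omega)).symm
      | inr h =>
        -- negOf (y - y'') = x forces y'' = x, excluded
        have hle : ∀ i, x i ≤ y'' i := by
          intro i
          have := congrFun h i
          simp only [negOf, Pi.sub_apply, natToInt] at this
          omega
        have : x = y'' := eq_of_le_of_sum_le hle (by omega)
        exact hy''.2 (Or.inl this.symm)
  · intro y' hy'
    by_cases hx' : y' = x
    · subst hx'; exact Relation.ReflTransGen.refl
    by_cases hy'' : y' = y
    · subst hy''
      exact accessible_mono Set.subset_union_left hacc
    · refine Relation.ReflTransGen.tail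
        (accessible_mono Set.subset_union_left hacc) ?_
      refine ⟨natToInt y - natToInt y',
        Set.mem_union_right _ ⟨y', ⟨hy', ?_⟩, rfl⟩, Or.inr (by ring)⟩
      rintro (rfl | rfl)
      · exact hx' rfl
      · exact hy'' rfl

end Final


/-- `x` is an indispensable monomial iff the fiber of `Ax` contains more
than one `B_{|x|-1}`-equivalence class and `{x}` forms such an equivalence class by
itself. -/
theorem indispensableMonomial_iff_singleton_class
    {p d : ℕ} (hp : 0 < p) (hd : 0 < d)
    (A : Matrix (Fin d) (Fin p) ℤ) (hA : IsHomogeneousMatrix A) (x : Fin p → ℕ) :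
    IsIndispensableMonomial A x ↔
      ((∃ y₁ ∈ fiberOf A (A.mulVec (natToInt x)), ∃ y₂ ∈ fiberOf A (A.mulVec (natToInt x)),
          ¬ Accessible (Bmoves A ((∑ i, x i) - 1)) y₁ y₂) ∧
        ∀ y ∈ fiberOf A (A.mulVec (natToInt x)),
          Accessible (Bmoves A ((∑ i, x i) - 1)) x y → y = x) := by

  constructor
  · intro hind
    by_cases hx0 : x = 0
    · exact absurd (hx0 ▸ hind) (not_indisp_zero hA)
    · exact ⟨forward_conj1 hA hx0 hind, forward_conj2 hA hx0 hind⟩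
  · rintro ⟨h1, h2⟩
    exact backward_dir hA x h1 h2
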